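/- For every integer N ≥ 1, every n with 1 ≤ n ≤ N, and every real t, the matrix exponential satisfies exp(i t Y_n) = e^{i t ε}·V_n(t), where Y_n := ε·I + ((E−ε)/2)·J_n + X_n (viewed as a complex (N+1)×(N+1) matrix). -/

import Mathlib

noncomputable def gf (E ε η t : ℝ) : ℂ :=
  Complex.exp (Complex.I * t * (E - ε) / 2)

noncomputable def wf (E ε η t : ℝ) : ℂ :=
  (2 * Complex.I * η / Real.sqrt ((E - ε) ^ 2 + 4 * η ^ 2)) *
    Real.sin (t * Real.sqrt ((E - ε) ^ 2 / 4 + η ^ 2))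

noncomputable def zf (E ε η t : ℝ) : ℂ :=
  (Real.cos (t * Real.sqrt ((E - ε) ^ 2 / 4 + η ^ 2)) : ℂ) +
    (Complex.I * (E - ε) / Real.sqrt ((E - ε) ^ 2 + 4 * η ^ 2)) *
      Real.sin (t * Real.sqrt ((E - ε) ^ 2 / 4 + η ^ 2))

noncomputable def Vmat (E ε η : ℝ) (N n : ℕ) (t : ℝ) :
    Matrix (Fin (N + 1)) (Fin (N + 1)) ℂ :=
  fun j k =>
    if j.val = 0 then
      gf E ε η t * zf E ε η t * (if k.val = 0 then 1 else 0) +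
        gf E ε η t * wf E ε η t * (if k.val = n then 1 else 0)
    else if j.val = n then
      gf E ε η t * wf E ε η t * (if k.val = 0 then 1 else 0) +
        gf E ε η t * zf E ε η (-t) * (if k.val = n then 1 else 0)
    else if j = k then 1 else 0

def Jmat (N n : ℕ) : Matrix (Fin (N + 1)) (Fin (N + 1)) ℝ :=
  fun j k => if (j.val = 0 ∧ k.val = 0) ∨ (j.val = n ∧ k.val = n) then 1 else 0

noncomputable def Xmat (E ε η : ℝ) (N n : ℕ) : Matrix (Fin (N + 1)) (Fin (N + 1)) ℝ :=
  fun j k =>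
    if j.val = 0 ∧ k.val = 0 then (E - ε) / 2
    else if j.val = n ∧ k.val = n then -(E - ε) / 2
    else if (j.val = 0 ∧ k.val = n) ∨ (j.val = n ∧ k.val = 0) then η
    else 0

noncomputable def Ymat (E ε η : ℝ) (N n : ℕ) : Matrix (Fin (N + 1)) (Fin (N + 1)) ℂ :=
  (fun j k => ((ε • (1 : Matrix (Fin (N + 1)) (Fin (N + 1)) ℝ) +
      ((E - ε) / 2) • Jmat N n + Xmat E ε η N n) j k : ℂ))

open Matrix in
/-- Auxiliary: matrices that differ from a scalar multiple of the identity only in the four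
entries `(0,0), (0,n), (n,0), (n,n)`. -/
noncomputable def bm (N n : ℕ) (hn : n < N + 1) (p q r s u : ℂ) :
    Matrix (Fin (N + 1)) (Fin (N + 1)) ℂ :=
  u • 1 + (p - u) • Matrix.single 0 0 (1 : ℂ) + q • Matrix.single 0 ⟨n, hn⟩ (1 : ℂ) +
    r • Matrix.single ⟨n, hn⟩ 0 (1 : ℂ) + (s - u) • Matrix.single ⟨n, hn⟩ ⟨n, hn⟩ (1 : ℂ)

theorem bm_ext (N n : ℕ) (hn : n < N + 1) {p q r s u p' q' r' s' u' : ℂ}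
    (h1 : p = p') (h2 : q = q') (h3 : r = r') (h4 : s = s') (h5 : u = u') :
    bm N n hn p q r s u = bm N n hn p' q' r' s' u' := by
  rw [h1, h2, h3, h4, h5]

open Matrix in
theorem bm_mul (N n : ℕ) (hn : n < N + 1) (hn0 : n ≠ 0) (p q r s u p' q' r' s' u' : ℂ) :
    bm N n hn p q r s u * bm N n hn p' q' r' s' u' =
      bm N n hn (p * p' + q * r') (p * q' + q * s') (r * p' + s * r') (r * q' + s * s')
        (u * u') := by
  have h01 : (0 : Fin (N + 1)) ≠ ⟨n, hn⟩ := by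
    simp [Fin.ext_iff]; omega
  have z1 : ∀ (i l : Fin (N + 1)) (c d : ℂ),
      Matrix.single i (0 : Fin (N + 1)) c * Matrix.single ⟨n, hn⟩ l d = 0 :=
    fun i l c d => Matrix.single_mul_single_of_ne c i _ _ h01 d
  have z2 : ∀ (i l : Fin (N + 1)) (c d : ℂ),
      Matrix.single i (⟨n, hn⟩ : Fin (N + 1)) c * Matrix.single 0 l d = 0 :=
    fun i l c d => Matrix.single_mul_single_of_ne c i _ _ h01.symm d
  unfold bm
  simp only [mul_add, add_mul, smul_mul_assoc, mul_smul_comm, smul_smul, Matrix.one_mul,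
    Matrix.mul_one, Matrix.single_mul_single_same, z1, z2, one_mul, smul_zero]
  module

open Matrix in
theorem bm_one (N n : ℕ) (hn : n < N + 1) : bm N n hn 1 0 0 1 1 = 1 := by
  unfold bm; simp

theorem bm_smul (N n : ℕ) (hn : n < N + 1) (c p q r s u : ℂ) :
    c • bm N n hn p q r s u = bm N n hn (c * p) (c * q) (c * r) (c * s) (c * u) := by
  unfold bm
  module

open Matrix in
theorem diag_rep (N n : ℕ) (hn : n < N + 1) (hn0 : n ≠ 0) (p s u : ℂ) :
    Matrix.diagonal (fun j : Fin (N + 1) => if j.val = 0 then p else if j.val = n then s else u)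
      = bm N n hn p 0 0 s u := by
  ext j k
  rcases eq_or_ne (j : ℕ) 0 with hj0 | hj0 <;> rcases eq_or_ne (k : ℕ) 0 with hk0 | hk0 <;>
    rcases eq_or_ne (j : ℕ) n with hjn | hjn <;> rcases eq_or_ne (k : ℕ) n with hkn | hkn <;>
    simp_all [bm, Matrix.one_apply, Matrix.single, Matrix.diagonal_apply,
      Fin.ext_iff, -Fin.val_eq_zero_iff] <;>
    (try split_ifs) <;> first | ring1 | (exfalso; omega) | (intro; exfalso; omega)

open Matrix in
theorem Yrep (E ε η : ℝ) (N n : ℕ) (hn : n < N + 1) (hn0 : n ≠ 0) :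
    Ymat E ε η N n = bm N n hn (E : ℂ) (η : ℂ) (η : ℂ) (ε : ℂ) (ε : ℂ) := by
  ext j k
  rcases eq_or_ne (j : ℕ) 0 with hj0 | hj0 <;> rcases eq_or_ne (k : ℕ) 0 with hk0 | hk0 <;>
    rcases eq_or_ne (j : ℕ) n with hjn | hjn <;> rcases eq_or_ne (k : ℕ) n with hkn | hkn <;>
    simp_all [bm, Ymat, Jmat, Xmat, Matrix.one_apply, Matrix.single,
      Fin.ext_iff, -Fin.val_eq_zero_iff] <;>
    (try split_ifs) <;> push_cast <;> first | ring1 | (exfalso; omega) | (intro; exfalso; omega)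

open Matrix in
theorem Vrep (E ε η : ℝ) (N n : ℕ) (hn : n < N + 1) (hn0 : n ≠ 0) (t : ℝ) :
    Vmat E ε η N n t = bm N n hn (gf E ε η t * zf E ε η t) (gf E ε η t * wf E ε η t)
      (gf E ε η t * wf E ε η t) (gf E ε η t * zf E ε η (-t)) 1 := by
  ext j k
  rcases eq_or_ne (j : ℕ) 0 with hj0 | hj0 <;> rcases eq_or_ne (k : ℕ) 0 with hk0 | hk0 <;>
    rcases eq_or_ne (j : ℕ) n with hjn | hjn <;> rcases eq_or_ne (k : ℕ) n with hkn | hkn <;>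
    simp_all [bm, Vmat, Matrix.one_apply, Matrix.single, Fin.ext_iff, -Fin.val_eq_zero_iff] <;>
    (try split_ifs) <;> first | ring1 | (exfalso; omega) | (intro; exfalso; omega)

set_option maxHeartbeats 1000000 in
theorem stmt4 (E ε η : ℝ) (hη : 0 < η) (N n : ℕ) (hN : 1 ≤ N)
    (hn1 : 1 ≤ n) (hnN : n ≤ N) (t : ℝ) :
    NormedSpace.exp ((Complex.I * t) • Ymat E ε η N n) =
      Complex.exp (Complex.I * t * ε) • Vmat E ε η N n t := by
  have hn : n < N + 1 := by omega
  have hn0 : n ≠ 0 := by omega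
  set d : ℝ := Real.sqrt ((E - ε) ^ 2 / 4 + η ^ 2) with hdd
  have hpos : (0:ℝ) < (E - ε) ^ 2 / 4 + η ^ 2 := by positivity
  have hd0 : 0 < d := Real.sqrt_pos.2 hpos
  have hd2 : d ^ 2 = (E - ε) ^ 2 / 4 + η ^ 2 := Real.sq_sqrt hpos.le
  have hs2 : Real.sqrt ((E - ε) ^ 2 + 4 * η ^ 2) = 2 * d := by
    rw [show (E - ε) ^ 2 + 4 * η ^ 2 = (2 * d) ^ 2 by rw [mul_pow]; nlinarith [hd2]]
    exact Real.sqrt_sq (by positivity)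
  have hdc : (d : ℂ) ≠ 0 := by exact_mod_cast hd0.ne'
  have hηc : (η : ℂ) ≠ 0 := by exact_mod_cast hη.ne'
  have hd2c : (d : ℂ) ^ 2 = ((E : ℂ) - ε) ^ 2 / 4 + (η : ℂ) ^ 2 := by
    have := congrArg (fun x : ℝ => (x : ℂ)) hd2
    push_cast at this
    exact this
  -- abbreviations
  set a : ℂ := ((E : ℂ) - ε) / 2 with haa
  set C : ℂ := (Real.cos (t * d) : ℂ) with hC
  set S : ℂ := (Real.sin (t * d) : ℂ) with hS
  set G : ℂ := Complex.exp (Complex.I * t * (E - ε) / 2) with hG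
  set Eε : ℂ := Complex.exp (Complex.I * t * ε) with hEε
  have hplus : Complex.exp (Complex.I * t * (ε + a + d)) = Eε * G * (C + S * Complex.I) := by
    rw [haa, show Complex.I * (t : ℂ) * ((ε : ℂ) + ((E : ℂ) - (ε : ℂ)) / 2 + (d : ℂ)) =
        Complex.I * (t : ℂ) * (ε : ℂ) + Complex.I * (t : ℂ) * ((E : ℂ) - (ε : ℂ)) / 2 +
          ((t * d : ℝ) : ℂ) * Complex.I from by push_cast; ring,
      Complex.exp_add, Complex.exp_add, Complex.exp_mul_I, ← Complex.ofReal_cos,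
      ← Complex.ofReal_sin, ← hC, ← hS, ← hG, ← hEε]
  have hminus : Complex.exp (Complex.I * t * (ε + a - d)) = Eε * G * (C - S * Complex.I) := by
    rw [haa, show Complex.I * (t : ℂ) * ((ε : ℂ) + ((E : ℂ) - (ε : ℂ)) / 2 - (d : ℂ)) =
        Complex.I * (t : ℂ) * (ε : ℂ) + Complex.I * (t : ℂ) * ((E : ℂ) - (ε : ℂ)) / 2 +
          ((-(t * d) : ℝ) : ℂ) * Complex.I from by push_cast; ring,
      Complex.exp_add, Complex.exp_add, Complex.exp_mul_I, Complex.ofReal_neg,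
      Complex.cos_neg, Complex.sin_neg, ← Complex.ofReal_cos,
      ← Complex.ofReal_sin, ← hC, ← hS, ← hG, ← hEε]
    ring
  -- the conjugating matrices
  set U : Matrix (Fin (N + 1)) (Fin (N + 1)) ℂ :=
    bm N n hn (η : ℂ) (η : ℂ) ((d : ℂ) - a) (-(d : ℂ) - a) 1 with hU
  set Ui : Matrix (Fin (N + 1)) (Fin (N + 1)) ℂ :=
    bm N n hn (((d : ℂ) + a) / (2 * η * d)) (1 / (2 * d)) (((d : ℂ) - a) / (2 * η * d))
      (-(1 / (2 * d))) 1 with hUi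
  set Dm : Matrix (Fin (N + 1)) (Fin (N + 1)) ℂ :=
    bm N n hn (Complex.I * t * (ε + a + d)) 0 0 (Complex.I * t * (ε + a - d))
      (Complex.I * t * ε) with hDm
  clear_value d a C S G Eε U Ui Dm
  have hUUi : U * Ui = 1 := by
    rw [hU, hUi, bm_mul N n hn hn0, ← bm_one N n hn]
    refine bm_ext N n hn ?_ ?_ ?_ ?_ ?_
    · field_simp
      ring
    · field_simp; ring
    · field_simp
      ring
    · field_simp
      ring
    · ring
  have hUiU : Ui * U = 1 := by
    rw [hU, hUi, bm_mul N n hn hn0, ← bm_one N n hn]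
    refine bm_ext N n hn ?_ ?_ ?_ ?_ ?_
    · field_simp
      ring
    · field_simp
      ring
    · field_simp
      ring
    · field_simp
      ring
    · ring
  have hY : (Complex.I * t) • Ymat E ε η N n = U * Dm * Ui := by
    rw [Yrep E ε η N n hn hn0, bm_smul, hU, hUi, hDm, bm_mul N n hn hn0, bm_mul N n hn hn0]
    have h2ηd : 2 * (η:ℂ) * d ≠ 0 := by simp [hηc, hdc]
    refine bm_ext N n hn ?_ ?_ ?_ ?_ ?_
    · rw [haa]; ring_nf; field_simp
    · rw [haa]; ring_nf; field_simp
    · rw [haa, mul_div_assoc', mul_div_assoc', ← add_div, eq_div_iff h2ηd]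
      linear_combination (-(2 * (d:ℂ) * Complex.I * t)) * hd2c
    · rw [haa]; ring_nf; field_simp
    · ring1
  have hexpD : NormedSpace.exp Dm =
      bm N n hn (Complex.exp (Complex.I * t * (ε + a + d))) 0 0
        (Complex.exp (Complex.I * t * (ε + a - d))) (Complex.exp (Complex.I * t * ε)) := by
    rw [hDm, ← diag_rep N n hn hn0, Matrix.exp_diagonal, Pi.exp_def]
    simp only [← Complex.exp_eq_exp_ℂ, apply_ite Complex.exp]
    rw [diag_rep N n hn hn0]
  have hconj : NormedSpace.exp (U * Dm * Ui) = U * NormedSpace.exp Dm * Ui :=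
    Matrix.exp_units_conj (⟨U, Ui, hUUi, hUiU⟩ :
      (Matrix (Fin (N + 1)) (Fin (N + 1)) ℂ)ˣ) Dm
  rw [hY, hconj, hexpD, Vrep E ε η N n hn hn0 t, ← hEε, bm_smul, hU, hUi,
    bm_mul N n hn hn0, bm_mul N n hn hn0]
  have hSc : Complex.sin ((t:ℂ) * d) = S := by rw [hS, Complex.ofReal_sin, Complex.ofReal_mul]
  have hCc : Complex.cos ((t:ℂ) * d) = C := by rw [hC, Complex.ofReal_cos, Complex.ofReal_mul]
  refine bm_ext N n hn ?_ ?_ ?_ ?_ ?_ <;>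
    [skip; skip; skip; skip; ring1] <;>
    (simp only [gf, zf, wf, hs2, ← hdd, hplus, hminus, neg_mul, Real.sin_neg, Real.cos_neg]
     push_cast
     try rw [hSc]
     try rw [hCc]
     rw [← hG]
     try rw [haa])
  · field_simp <;> ring1
  · field_simp <;> ring1
  · rw [mul_div_assoc', mul_div_assoc', ← add_div,
      show Eε * (G * (2 * Complex.I * ↑η / (2 * ↑d) * S)) =
        Eε * G * 2 * Complex.I * ↑η * S / (2 * ↑d) from by ring,
      div_eq_div_iff (by simp [hηc, hdc]) (by simp [hdc])]
    linear_combination (4 * ↑d * S * Complex.I * Eε * G) * hd2c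
  · field_simp <;> ring1
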